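/- Let C = while e do (C₁;…;Cₙ) be a loop of the WHILE language, E its dependency relation, and S₁,…,S_k a saturated covering of C, with split loops C^1,…,C^k. Suppose the execution of C from a state σ terminates. Then for all j, l ∈ {1,…,k}, the executions of C^j and C^l from σ terminate in states σ_j and σ_l, and for every variable x that is modified both by C^j and by C^l (i.e., x ∈ Out(C_i) for some i ∈ S_j and x ∈ Out(C_{i'}) for some i' ∈ S_l), one has σ_j(x) = σ_l(x). Hence running the split loops in parallel on private copies of the state produces no race condition: any two split loops modifying the same variable assign it the same final value. -/

import Mathlib

/-- Variables: a countably infinite set. -/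
abbrev Var := ℕ

/-- Values: integers or integer arrays (total functions ℤ → ℤ). -/
inductive Val : Type where
  | int : ℤ → Val
  | arr : (ℤ → ℤ) → Val

/-- Coerce a value to an integer. -/
def Val.toInt : Val → ℤ
  | .int z => z
  | .arr _ => 0

/-- Coerce a value to an array. -/
def Val.toArr : Val → (ℤ → ℤ)
  | .int _ => fun _ => 0
  | .arr a => a

/-- States: total maps from variables to values. -/
abbrev State := Var → Val

/-- Expressions: variables, integer literals, array reads, and
applications of fixed interpreted `n`-ary operators. -/
inductive Expr : Type where
  | var : Var → Expr
  | lit : ℤ → Expr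
  | read : Var → Expr → Expr
  | op : (n : ℕ) → ((Fin n → ℤ) → ℤ) → (Fin n → Expr) → Expr

/-- Evaluation of expressions. -/
def Expr.eval (σ : State) : Expr → Val
  | .var x => σ x
  | .lit z => .int z
  | .read t e => .int ((σ t).toArr ((Expr.eval σ e).toInt))
  | .op n f args => .int (f fun i => (Expr.eval σ (args i)).toInt)

/-- An expression is truthy in a state if it evaluates to a nonzero integer. -/
def Expr.truthy (e : Expr) (σ : State) : Prop := (e.eval σ).toInt ≠ 0

/-- Variables occurring in an expression. -/
def Expr.occ : Expr → Set Var
  | .var x => {x}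
  | .lit _ => ∅
  | .read t e => {t} ∪ Expr.occ e
  | .op n _ args => ⋃ i : Fin n, Expr.occ (args i)

/-- Commands of the WHILE language. -/
inductive Com : Type where
  | assign : Var → Expr → Com
  | store : Var → Expr → Expr → Com          -- t[e₁] := e₂
  | ite : Expr → Com → Com → Com
  | whileDo : Expr → Com → Com
  | use : List Var → Com
  | skip : Com
  | seq : Com → Com → Com

/-- `Out C`: the set of variables modified by `C`. -/
def Com.out : Com → Set Var
  | .assign x _ => {x}
  | .store t _ _ => {t}
  | .ite _ c₁ c₂ => c₁.out ∪ c₂.out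
  | .whileDo _ c => c.out
  | .use _ => ∅
  | .skip => ∅
  | .seq c₁ c₂ => c₁.out ∪ c₂.out

/-- `In C`: the set of variables used by `C`. -/
def Com.inp : Com → Set Var
  | .assign _ e => e.occ
  | .store _ e₁ e₂ => e₁.occ ∪ e₂.occ
  | .ite e c₁ c₂ => e.occ ∪ c₁.inp ∪ c₂.inp
  | .whileDo e c => e.occ ∪ c.inp
  | .use xs => {x | x ∈ xs}
  | .skip => ∅
  | .seq c₁ c₂ => c₁.inp ∪ c₂.inp

/-- `Occ C`: the set of variables occurring in `C`. -/
def Com.occ : Com → Set Var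
  | .assign x e => {x} ∪ e.occ
  | .store t e₁ e₂ => {t} ∪ e₁.occ ∪ e₂.occ
  | .ite e c₁ c₂ => e.occ ∪ c₁.occ ∪ c₂.occ
  | .whileDo e c => e.occ ∪ c.occ
  | .use xs => {x | x ∈ xs}
  | .skip => ∅
  | .seq c₁ c₂ => c₁.occ ∪ c₂.occ

/-- Standard deterministic big-step operational semantics. -/
inductive BigStep : Com → State → State → Prop where
  | assign {x e σ} :
      BigStep (.assign x e) σ (Function.update σ x (e.eval σ))
  | store {t e₁ e₂ σ} :
      BigStep (.store t e₁ e₂) σ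
        (Function.update σ t
          (Val.arr (Function.update (σ t).toArr ((e₁.eval σ).toInt) ((e₂.eval σ).toInt))))
  | iteTrue {e c₁ c₂ σ σ'} : e.truthy σ → BigStep c₁ σ σ' →
      BigStep (.ite e c₁ c₂) σ σ'
  | iteFalse {e c₁ c₂ σ σ'} : ¬ e.truthy σ → BigStep c₂ σ σ' →
      BigStep (.ite e c₁ c₂) σ σ'
  | whileTrue {e c σ σ₁ σ₂} : e.truthy σ → BigStep c σ σ₁ →
      BigStep (.whileDo e c) σ₁ σ₂ → BigStep (.whileDo e c) σ σ₂
  | whileFalse {e c σ} : ¬ e.truthy σ → BigStep (.whileDo e c) σ σ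
  | use {xs σ} : BigStep (.use xs) σ σ
  | skip {σ} : BigStep .skip σ σ
  | seq {c₁ c₂ σ σ₁ σ₂} : BigStep c₁ σ σ₁ → BigStep c₂ σ₁ σ₂ →
      BigStep (.seq c₁ c₂) σ σ₂

/-- Sequential composition of a list of commands. -/
def seqList (l : List Com) : Com := l.foldr Com.seq Com.skip

/-- The body `C_{i₁};…;C_{i_m}` selected by a set `S` of indices,
with `i₁ < … < i_m` enumerating `S`. -/
def selBody {n : ℕ} (body : Fin n → Com) (S : Finset (Fin n)) : Com :=
  seqList ((S.sort (· ≤ ·)).map body)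

/-- The split loop `while e do (C_{i₁};…;C_{i_m})` for a set `S` of indices. -/
def splitLoop {n : ℕ} (e : Expr) (body : Fin n → Com) (S : Finset (Fin n)) : Com :=
  Com.whileDo e (selBody body S)

/-- The dependency relation of the loop `while e do (C₁;…;Cₙ)`:
`Dep e body i j` iff either `i ≠ j` and `Out(C_j) ∩ (In(C_i) ∪ Out(C_i)) ≠ ∅`
(flow and output dependence), or `Out(C_j) ∩ Occ(e) ≠ ∅` (loop-guard correction). -/
def Dep {n : ℕ} (e : Expr) (body : Fin n → Com) (i j : Fin n) : Prop :=
  (i ≠ j ∧ ((body j).out ∩ ((body i).inp ∪ (body i).out)).Nonempty) ∨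
  ((body j).out ∩ e.occ).Nonempty

/-- A saturated covering of the loop `while e do (C₁;…;Cₙ)`:
a finite family of nonempty subsets of `{1,…,n}` covering it,
each closed under the dependency relation. -/
def SaturatedCovering {n k : ℕ} (e : Expr) (body : Fin n → Com)
    (S : Fin k → Finset (Fin n)) : Prop :=
  (∀ j, (S j).Nonempty) ∧ (∀ i, ∃ j, i ∈ S j) ∧
  (∀ j i m, i ∈ S j → Dep e body i m → m ∈ S j)

/-- `p`-fold sequential iteration of a command. -/
def iterate (c : Com) (p : ℕ) : Com := seqList (List.replicate p c)

/-! ### Auxiliary lemmas for the proof -/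

/-- Expression evaluation only depends on the occurring variables. -/
lemma Expr.eval_congr {σ τ : State} :
    ∀ e : Expr, (∀ x ∈ e.occ, σ x = τ x) → e.eval σ = e.eval τ := by
  intro e
  induction e with
  | var x => intro h; simpa [Expr.eval] using h x (by simp [Expr.occ])
  | lit z => intro _; rfl
  | read t e ih =>
      intro h
      have ht : σ t = τ t := h t (by simp [Expr.occ])
      have he : e.eval σ = e.eval τ := ih fun x hx => h x (by simp [Expr.occ, hx])
      simp [Expr.eval, ht, he]
  | op m f args ih =>
      intro h
      simp only [Expr.eval, Val.int.injEq]
      congr 1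
      funext i
      rw [ih i fun x hx => h x (by simp only [Expr.occ, Set.mem_iUnion]; exact ⟨i, hx⟩)]

lemma Expr.truthy_congr {σ τ : State} {e : Expr}
    (h : ∀ x ∈ e.occ, σ x = τ x) : e.truthy σ ↔ e.truthy τ := by
  unfold Expr.truthy; rw [Expr.eval_congr e h]

/-- Frame property: a command only modifies variables in its `out` set. -/
lemma BigStep.frame {c : Com} {σ σ' : State} (h : BigStep c σ σ') :
    ∀ x, x ∉ c.out → σ' x = σ x := by
  induction h with
  | @assign y e σ =>
      intro x hx
      have : x ≠ y := by simpa [Com.out] using hx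
      simp [Function.update_of_ne this]
  | @store t e₁ e₂ σ =>
      intro x hx
      have : x ≠ t := by simpa [Com.out] using hx
      simp [Function.update_of_ne this]
  | iteTrue _ _ ih => intro x hx; exact ih x (by simp [Com.out] at hx ⊢; exact hx.1)
  | iteFalse _ _ ih => intro x hx; exact ih x (by simp [Com.out] at hx ⊢; exact hx.2)
  | whileTrue _ _ _ ih₁ ih₂ =>
      intro x hx
      rw [ih₂ x (by simpa [Com.out] using hx), ih₁ x (by simpa [Com.out] using hx)]
  | whileFalse _ => intro x _; rfl
  | use => intro x _; rfl
  | skip => intro x _; rfl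
  | seq _ _ ih₁ ih₂ =>
      intro x hx
      simp only [Com.out, Set.mem_union, not_or] at hx
      rw [ih₂ x hx.2, ih₁ x hx.1]

/-- Coincidence/transfer lemma: if two states agree on a set `A` containing
`inp c ∪ out c`, execution from both yields states agreeing on `A`. -/
lemma BigStep.transfer {c : Com} {σ σ' : State} (h : BigStep c σ σ') :
    ∀ (A : Set Var) (τ : State), c.inp ∪ c.out ⊆ A → (∀ x ∈ A, σ x = τ x) →
    ∃ τ', BigStep c τ τ' ∧ ∀ x ∈ A, σ' x = τ' x := by
  induction h with
  | @assign y e σ =>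
      intro A τ hsub hag
      refine ⟨Function.update τ y (e.eval τ), .assign, ?_⟩
      intro x hx
      have he : e.eval σ = e.eval τ :=
        Expr.eval_congr e fun z hz => hag z (hsub (Or.inl hz))
      by_cases hxy : x = y
      · subst hxy; simp [he]
      · simp [Function.update_of_ne hxy, hag x hx]
  | @store t e₁ e₂ σ =>
      intro A τ hsub hag
      have h1 : e₁.eval σ = e₁.eval τ :=
        Expr.eval_congr e₁ fun z hz => hag z (hsub (Or.inl (Or.inl hz)))
      have h2 : e₂.eval σ = e₂.eval τ :=
        Expr.eval_congr e₂ fun z hz => hag z (hsub (Or.inl (Or.inr hz)))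
      have ht : σ t = τ t := hag t (hsub (Or.inr rfl))
      refine ⟨_, .store, ?_⟩
      intro x hx
      by_cases hxt : x = t
      · subst hxt; simp [h1, h2, ht]
      · simp [Function.update_of_ne hxt, hag x hx]
  | @iteTrue e c₁ c₂ σ σ'' ht _ ih =>
      intro A τ hsub hag
      have hsub' : c₁.inp ∪ c₁.out ⊆ A := by
        intro x hx
        rcases hx with hx | hx
        · exact hsub (Or.inl (Or.inl (Or.inr hx)))
        · exact hsub (Or.inr (Or.inl hx))
      obtain ⟨τ', hbs, hag'⟩ := ih A τ hsub' hag
      have htτ : e.truthy τ := by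
        rw [← Expr.truthy_congr fun z hz => hag z (hsub (Or.inl (Or.inl (Or.inl hz))))]
        exact ht
      exact ⟨τ', .iteTrue htτ hbs, hag'⟩
  | @iteFalse e c₁ c₂ σ σ'' ht _ ih =>
      intro A τ hsub hag
      have hsub' : c₂.inp ∪ c₂.out ⊆ A := by
        intro x hx
        rcases hx with hx | hx
        · exact hsub (Or.inl (Or.inr hx))
        · exact hsub (Or.inr (Or.inr hx))
      obtain ⟨τ', hbs, hag'⟩ := ih A τ hsub' hag
      have htτ : ¬ e.truthy τ := by
        rw [← Expr.truthy_congr fun z hz => hag z (hsub (Or.inl (Or.inl (Or.inl hz))))]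
        exact ht
      exact ⟨τ', .iteFalse htτ hbs, hag'⟩
  | @whileTrue e c σ σ₁ σ₂ ht _ _ ih₁ ih₂ =>
      intro A τ hsub hag
      have hsub' : c.inp ∪ c.out ⊆ A := by
        intro x hx
        rcases hx with hx | hx
        · exact hsub (Or.inl (Or.inr hx))
        · exact hsub (Or.inr hx)
      obtain ⟨τ₁, hbs₁, hag₁⟩ := ih₁ A τ hsub' hag
      obtain ⟨τ₂, hbs₂, hag₂⟩ := ih₂ A τ₁ hsub hag₁
      have htτ : e.truthy τ := by
        rw [← Expr.truthy_congr fun z hz => hag z (hsub (Or.inl (Or.inl hz)))]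
        exact ht
      exact ⟨τ₂, .whileTrue htτ hbs₁ hbs₂, hag₂⟩
  | @whileFalse e c σ ht =>
      intro A τ hsub hag
      have htτ : ¬ e.truthy τ := by
        rw [← Expr.truthy_congr fun z hz => hag z (hsub (Or.inl (Or.inl hz)))]
        exact ht
      exact ⟨τ, .whileFalse htτ, hag⟩
  | use => intro A τ _ hag; exact ⟨τ, .use, hag⟩
  | skip => intro A τ _ hag; exact ⟨τ, .skip, hag⟩
  | @seq c₁ c₂ σ σ₁ σ₂ _ _ ih₁ ih₂ =>
      intro A τ hsub hag
      have hsub₁ : c₁.inp ∪ c₁.out ⊆ A := by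
        intro x hx
        rcases hx with hx | hx
        · exact hsub (Or.inl (Or.inl hx))
        · exact hsub (Or.inr (Or.inl hx))
      have hsub₂ : c₂.inp ∪ c₂.out ⊆ A := by
        intro x hx
        rcases hx with hx | hx
        · exact hsub (Or.inl (Or.inr hx))
        · exact hsub (Or.inr (Or.inr hx))
      obtain ⟨τ₁, hbs₁, hag₁⟩ := ih₁ A τ hsub₁ hag
      obtain ⟨τ₂, hbs₂, hag₂⟩ := ih₂ A τ₁ hsub₂ hag₁
      exact ⟨τ₂, .seq hbs₁ hbs₂, hag₂⟩

lemma seqList_nil : seqList [] = Com.skip := rfl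
lemma seqList_cons (c : Com) (l : List Com) : seqList (c :: l) = Com.seq c (seqList l) := rfl

/-- Splitting a sequence: dropping commands whose outputs avoid `R` preserves
the final state on `R`, provided kept commands read and write only inside `R`. -/
lemma seq_split {n : ℕ} (body : Fin n → Com) (S : Finset (Fin n)) (R : Set Var)
    (hin : ∀ i ∈ S, (body i).inp ∪ (body i).out ⊆ R)
    (hout : ∀ i, i ∉ S → ∀ x ∈ (body i).out, x ∉ R) :
    ∀ (L : List (Fin n)) (σ σ' τ : State),
      BigStep (seqList (L.map body)) σ σ' → (∀ x ∈ R, σ x = τ x) →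
      ∃ τ', BigStep (seqList ((L.filter (fun i => decide (i ∈ S))).map body)) τ τ' ∧
        ∀ x ∈ R, σ' x = τ' x := by
  intro L
  induction L with
  | nil =>
      intro σ σ' τ h hag
      rw [List.map_nil, seqList_nil] at h
      cases h
      exact ⟨τ, .skip, hag⟩
  | cons i L ih =>
      intro σ σ' τ h hag
      rw [List.map_cons, seqList_cons] at h
      cases h with
      | @seq _ _ _ σ₁ _ h1 h2 =>
        by_cases hi : i ∈ S
        · obtain ⟨τ₁, hbs, hag₁⟩ := h1.transfer R τ (hin i hi) hag
          obtain ⟨τ', hrest, hag'⟩ := ih _ _ _ h2 hag₁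
          refine ⟨τ', ?_, hag'⟩
          rw [List.filter_cons_of_pos (by simpa using hi), List.map_cons, seqList_cons]
          exact .seq hbs hrest
        · have hag₁ : ∀ x ∈ R, σ₁ x = τ x := fun x hx => by
            rw [h1.frame x (fun hmem => hout i hi x hmem hx)]
            exact hag x hx
          obtain ⟨τ', hrest, hag'⟩ := ih _ _ _ h2 hag₁
          rw [List.filter_cons_of_neg (by simpa using hi)]
          exact ⟨τ', hrest, hag'⟩

/-- Splitting a loop. -/
lemma while_split {n : ℕ} (e : Expr) (body : Fin n → Com) (S : Finset (Fin n)) (R : Set Var)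
    (L : List (Fin n)) (he : e.occ ⊆ R)
    (hin : ∀ i ∈ S, (body i).inp ∪ (body i).out ⊆ R)
    (hout : ∀ i, i ∉ S → ∀ x ∈ (body i).out, x ∉ R) :
    ∀ {c : Com} {σ σ' : State}, BigStep c σ σ' →
      c = Com.whileDo e (seqList (L.map body)) →
      ∀ τ : State, (∀ x ∈ R, σ x = τ x) →
      ∃ τ', BigStep (Com.whileDo e (seqList ((L.filter (fun i => decide (i ∈ S))).map body))) τ τ' ∧
        ∀ x ∈ R, σ' x = τ' x := by
  intro c σ σ' h
  induction h with
  | assign => intro heq; exact absurd heq (by simp)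
  | store => intro heq; exact absurd heq (by simp)
  | iteTrue _ _ _ => intro heq; exact absurd heq (by simp)
  | iteFalse _ _ _ => intro heq; exact absurd heq (by simp)
  | use => intro heq; exact absurd heq (by simp)
  | skip => intro heq; exact absurd heq (by simp)
  | seq _ _ _ _ => intro heq; exact absurd heq (by simp)
  | @whileTrue e' c' σ σ₁ σ₂ ht hb hw ih₁ ih₂ =>
      intro heq τ hag
      obtain ⟨he', hc'⟩ : e' = e ∧ c' = seqList (L.map body) := by
        cases heq; exact ⟨rfl, rfl⟩
      subst he'; subst hc'
      obtain ⟨τ₁, hbs₁, hag₁⟩ := seq_split body S R hin hout L σ σ₁ τ hb hag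
      obtain ⟨τ', hbs₂, hag₂⟩ := ih₂ rfl τ₁ hag₁
      have htτ : e'.truthy τ := by
        rw [← Expr.truthy_congr fun z hz => hag z (he hz)]
        exact ht
      exact ⟨τ', .whileTrue htτ hbs₁ hbs₂, hag₂⟩
  | @whileFalse e' c' σ ht =>
      intro heq τ hag
      obtain ⟨he', hc'⟩ : e' = e ∧ c' = seqList (L.map body) := by
        cases heq; exact ⟨rfl, rfl⟩
      subst he'
      have htτ : ¬ e'.truthy τ := by
        rw [← Expr.truthy_congr fun z hz => hag z (he hz)]
        exact ht
      exact ⟨τ, .whileFalse htτ, hag⟩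

/-- Sorting a subset is the filter of the sorted universe. -/
lemma sort_filter_univ {n : ℕ} (S : Finset (Fin n)) :
    (Finset.univ.sort (α := Fin n) (· ≤ ·)).filter (fun i => decide (i ∈ S)) =
      S.sort (· ≤ ·) := by
  apply (fun hp h1 h2 => List.Perm.eq_of_pairwise' (r := (· ≤ · : Fin n → Fin n → Prop)) h1 h2 hp)
  · rw [List.perm_ext_iff_of_nodup ((Finset.sort_nodup _ _).filter _) (Finset.sort_nodup _ _)]
    intro a
    simp [List.mem_filter, Finset.mem_sort]
  · exact (Finset.pairwise_sort _ _).filter _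
  · exact Finset.pairwise_sort _ _

/-- If the loop terminates from `σ`, then any two split loops
`C^j`, `C^l` terminate from `σ` in states `σ_j`, `σ_l` which agree on every
variable modified by both: no race condition arises. -/
theorem split_loops_no_race {n k : ℕ} (e : Expr) (body : Fin n → Com)
    (S : Fin k → Finset (Fin n)) (hS : SaturatedCovering e body S)
    (σ : State) (h : ∃ σ', BigStep (splitLoop e body Finset.univ) σ σ') :
    ∀ j l : Fin k, ∃ σj σl : State,
      BigStep (splitLoop e body (S j)) σ σj ∧
      BigStep (splitLoop e body (S l)) σ σl ∧
      ∀ x : Var, (∃ i ∈ S j, x ∈ (body i).out) →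
        (∃ i' ∈ S l, x ∈ (body i').out) → σj x = σl x := by
  obtain ⟨σ', hfull⟩ := h
  have key : ∀ j : Fin k, ∃ σj, BigStep (splitLoop e body (S j)) σ σj ∧
      ∀ i ∈ S j, ∀ x ∈ (body i).out, σ' x = σj x := by
    intro j
    set R : Set Var :=
      e.occ ∪ ⋃ i ∈ (S j : Set (Fin n)), ((body i).inp ∪ (body i).out) with hR
    have he : e.occ ⊆ R := Set.subset_union_left
    have hin : ∀ i ∈ S j, (body i).inp ∪ (body i).out ⊆ R := by
      intro i hi x hx
      refine Or.inr ?_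
      simp only [Set.mem_iUnion]
      exact ⟨i, hi, hx⟩
    have hout : ∀ i, i ∉ S j → ∀ x ∈ (body i).out, x ∉ R := by
      intro i hi x hx hxR
      obtain ⟨i₀, hi₀⟩ := hS.1 j
      rcases hxR with hxe | hxU
      · exact hi (hS.2.2 j i₀ i hi₀ (Or.inr ⟨x, hx, hxe⟩))
      · simp only [Set.mem_iUnion] at hxU
        obtain ⟨i', hi', hx'⟩ := hxU
        by_cases hii : i' = i
        · exact hi (hii ▸ hi')
        · exact hi (hS.2.2 j i' i hi' (Or.inl ⟨hii, x, hx, hx'⟩))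
    have hfull' :
        BigStep (Com.whileDo e (seqList ((Finset.univ.sort (α := Fin n) (· ≤ ·)).map body)))
          σ σ' := hfull
    obtain ⟨σj, hbs, hag⟩ :=
      while_split e body (S j) R (Finset.univ.sort (· ≤ ·)) he hin hout hfull' rfl σ
        (fun _ _ => rfl)
    rw [sort_filter_univ] at hbs
    refine ⟨σj, hbs, ?_⟩
    intro i hi x hx
    exact hag x (hin i hi (Or.inr hx))
  intro j l
  obtain ⟨σj, hj, haj⟩ := key j
  obtain ⟨σl, hl, hal⟩ := key l
  refine ⟨σj, σl, hj, hl, ?_⟩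
  rintro x ⟨i, hi, hx⟩ ⟨i', hi', hx'⟩
  rw [← haj i hi x hx, ← hal i' hi' x hx']
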